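/- For a simple arrangement H̃ on ground set I, the structure sheaf A on the lattice of flats (with stalks the polynomial rings Sym R^F and restriction maps the projections setting variables e_i, i ∈ F∖E, to zero) is flabby: for every flat F the restriction A(F) → A(∂F) is surjective with kernel the principal ideal generated by ∏_{i∈F} e_i. Consequently A is the minimal extension sheaf L_∅ on L_{H̃}. -/

import Mathlib

open MvPolynomial

variable {I : Type} [Fintype I] [DecidableEq I]

def IsFlat (V : AffineSubspace ℝ (I → ℝ)) (F : Finset I) : Prop :=
  ∃ x ∈ V, ∀ i : I, i ∈ F ↔ x i = 0

def Essential (V : AffineSubspace ℝ (I → ℝ)) : Prop :=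
  ∀ i : I, ∃ x ∈ V, ∃ y ∈ V, x i ≠ y i

noncomputable def resF (V : AffineSubspace ℝ (I → ℝ)) (F : Finset I) :
    V.direction →ₗ[ℝ] ({i : I // i ∈ F} → ℝ) :=
  (LinearMap.funLeft ℝ ℝ (fun i : {i : I // i ∈ F} => (i : I))).comp V.direction.subtype

/-- Simplicity: every flat `F` satisfies `|F| = codim H_F`. -/
def IsSimple (V : AffineSubspace ℝ (I → ℝ)) : Prop :=
  ∀ F : Finset I, IsFlat V F →
    F.card + Module.finrank ℝ (LinearMap.ker (resF V F)) = Module.finrank ℝ V.direction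

/-- The face ideal of a collection of finite subsets of `I`. -/
noncomputable def faceIdeal (Δ : Set (Finset I)) : Ideal (MvPolynomial I ℝ) :=
  Ideal.span {p | ∃ S : Finset I, S ∉ Δ ∧ p = ∏ i ∈ S, (X i : MvPolynomial I ℝ)}

/-- The full simplex on `F`:  its face ring is `Sym ℝ^F`, the stalk of the structure
sheaf of a simple arrangement at the flat `F`. -/
def powFaces (F : Finset I) : Set (Finset I) := {S | S ⊆ F}

/-- The stalk `A(F) ≅ Sym ℝ^F` of the structure sheaf of a simple arrangement,
realized as `ℝ[e_i : i ∈ I] / (e_i : i ∉ F)`. -/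
noncomputable def stalkA (F : Finset I) : MvPolynomial I ℝ →+* (MvPolynomial I ℝ ⧸ faceIdeal (powFaces F)) :=
  Ideal.Quotient.mk (faceIdeal (powFaces F))

set_option linter.unusedSectionVars false

noncomputable def killA (E : Finset I) : MvPolynomial I ℝ →ₐ[ℝ] MvPolynomial I ℝ :=
  aeval (fun i => if i ∈ E then X i else 0)

lemma killA_X (E : Finset I) (i : I) : killA E (X i) = if i ∈ E then X i else 0 := by
  simp [killA]

lemma killA_killA (E D : Finset I) (p : MvPolynomial I ℝ) :
    killA E (killA D p) = killA (E ∩ D) p := by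
  have : (killA (I := I) E).comp (killA D) = killA (E ∩ D) := by
    apply MvPolynomial.algHom_ext
    intro i
    simp only [AlgHom.comp_apply, killA_X]
    by_cases hD : i ∈ D
    · by_cases hE : i ∈ E <;> simp [hD, hE, killA_X, Finset.mem_inter]
    · simp [hD, Finset.mem_inter]
  exact AlgHom.congr_fun this p

lemma faceIdeal_powFaces_eq (E : Finset I) :
    faceIdeal (powFaces E) = Ideal.span ((fun i => (X i : MvPolynomial I ℝ)) '' {i | i ∉ E}) := by
  apply le_antisymm
  · rw [faceIdeal, Ideal.span_le]
    rintro p ⟨S, hS, rfl⟩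
    have : ∃ i ∈ S, i ∉ E := by
      by_contra h
      push_neg at h
      exact hS h
    obtain ⟨i, hiS, hiE⟩ := this
    rw [← Finset.mul_prod_erase S _ hiS]
    exact Ideal.mul_mem_right _ _ (Ideal.subset_span ⟨i, hiE, rfl⟩)
  · rw [Ideal.span_le]
    rintro p ⟨i, hi, rfl⟩
    exact Ideal.subset_span ⟨{i}, by simpa [powFaces] using hi, by simp⟩

lemma killA_eq_zero_of_mem {E : Finset I} {p : MvPolynomial I ℝ}
    (hp : p ∈ faceIdeal (powFaces E)) : killA E p = 0 := by
  rw [faceIdeal_powFaces_eq] at hp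
  have : Ideal.span ((fun i => (X i : MvPolynomial I ℝ)) '' {i | i ∉ E}) ≤
      RingHom.ker (killA (I := I) E).toRingHom := by
    rw [Ideal.span_le]
    rintro p ⟨i, hi, rfl⟩
    simp only [Set.mem_setOf_eq] at hi
    simp [RingHom.mem_ker, killA_X, hi]
  simpa [RingHom.mem_ker] using this hp

lemma sub_killA_mem (E : Finset I) (p : MvPolynomial I ℝ) :
    p - killA E p ∈ faceIdeal (powFaces E) := by
  induction p using MvPolynomial.induction_on with
  | C a => simp [killA]
  | add p q hp hq =>
    have : p + q - killA E (p + q) = (p - killA E p) + (q - killA E q) := by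
      rw [map_add]; ring
    rw [this]; exact Ideal.add_mem _ hp hq
  | mul_X p i hp =>
    by_cases hi : i ∈ E
    · have : p * X i - killA E (p * X i) = (p - killA E p) * X i := by
        rw [map_mul, killA_X, if_pos hi]; ring
      rw [this]; exact Ideal.mul_mem_right _ _ hp
    · have hXi : (X i : MvPolynomial I ℝ) ∈ faceIdeal (powFaces E) := by
        rw [faceIdeal_powFaces_eq]
        exact Ideal.subset_span ⟨i, hi, rfl⟩
      have : p * X i - killA E (p * X i) = p * X i - killA E p * killA E (X i) := by
        rw [map_mul]
      rw [this, killA_X, if_neg hi, mul_zero, sub_zero]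
      exact Ideal.mul_mem_left _ _ hXi

lemma mem_faceIdeal_iff_killA {E : Finset I} {p : MvPolynomial I ℝ} :
    p ∈ faceIdeal (powFaces E) ↔ killA E p = 0 := by
  constructor
  · exact killA_eq_zero_of_mem
  · intro h
    have := sub_killA_mem E p
    rwa [h, sub_zero] at this

lemma stalkA_killA (E : Finset I) (p : MvPolynomial I ℝ) :
    stalkA E (killA E p) = stalkA E p := by
  rw [stalkA, Ideal.Quotient.mk_eq_mk_iff_sub_mem, mem_faceIdeal_iff_killA,
    map_sub, killA_killA, Finset.inter_self, sub_self]

lemma stalkA_eq_zero_iff {E : Finset I} {p : MvPolynomial I ℝ} :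
    stalkA E p = 0 ↔ killA E p = 0 := by
  rw [stalkA, Ideal.Quotient.eq_zero_iff_mem, mem_faceIdeal_iff_killA]

lemma faceIdeal_mono {E F : Finset I} (h : E ⊆ F) :
    faceIdeal (powFaces F) ≤ faceIdeal (powFaces E) := by
  rw [faceIdeal_powFaces_eq, faceIdeal_powFaces_eq, Ideal.span_le]
  rintro p ⟨i, hi, rfl⟩
  exact Ideal.subset_span ⟨i, fun hiE => hi (h hiE), rfl⟩

lemma killA_monomial (E : Finset I) (m : I →₀ ℕ) (c : ℝ) :
    killA E (monomial m c) = if m.support ⊆ E then monomial m c else 0 := by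
  by_cases h : m.support ⊆ E
  · rw [if_pos h, killA, aeval_monomial, monomial_eq]
    rw [MvPolynomial.algebraMap_eq]
    congr 1
    apply Finsupp.prod_congr
    intro i hi
    rw [if_pos (h hi)]
  · rw [if_neg h, killA, aeval_monomial]
    obtain ⟨i, hiS, hiE⟩ := Finset.not_subset.mp h
    rw [Finsupp.prod, Finset.prod_eq_zero hiS, mul_zero]
    rw [if_neg hiE]
    exact zero_pow (Finsupp.mem_support_iff.mp hiS)

lemma coeff_killA (E : Finset I) (p : MvPolynomial I ℝ) (m : I →₀ ℕ) :
    coeff m (killA E p) = if m.support ⊆ E then coeff m p else 0 := by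
  induction p using MvPolynomial.induction_on' with
  | monomial m' a =>
    rw [killA_monomial]
    rcases eq_or_ne m' m with rfl | hne
    · by_cases h' : m'.support ⊆ E <;> simp [h', coeff_monomial]
    · by_cases h' : m'.support ⊆ E <;> simp [h', coeff_monomial, hne]
  | add p q hp hq =>
    rw [map_add, coeff_add, hp, hq, coeff_add]
    split_ifs <;> simp

lemma prod_X_eq_monomial (F : Finset I) :
    (∏ i ∈ F, (X i : MvPolynomial I ℝ)) = monomial (∑ i ∈ F, Finsupp.single i 1) 1 := by
  induction F using Finset.induction_on with
  | empty => simp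
  | insert a s h ih =>
    rw [Finset.prod_insert h, Finset.sum_insert h, ih,
      ← pow_one (X _ : MvPolynomial I ℝ), X_pow_eq_monomial, monomial_mul, mul_one]

lemma monomial_mem_span_prod {F : Finset I} {m : I →₀ ℕ} (h : ∀ i ∈ F, m i ≠ 0) (c : ℝ) :
    monomial m c ∈ Ideal.span {(∏ i ∈ F, (X i : MvPolynomial I ℝ))} := by
  rw [prod_X_eq_monomial]
  set u : I →₀ ℕ := ∑ i ∈ F, Finsupp.single i 1 with hu
  have hui : ∀ j, u j = if j ∈ F then 1 else 0 := by
    intro j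
    rw [hu, Finsupp.finset_sum_apply]
    simp [Finsupp.single_apply]
  have hle : u ≤ m := by
    intro j
    rw [hui]
    split_ifs with hj
    · exact Nat.one_le_iff_ne_zero.mpr (h j hj)
    · exact Nat.zero_le _
  have : monomial m c = monomial u 1 * monomial (m - u) c := by
    rw [monomial_mul, one_mul, add_tsub_cancel_of_le hle]
  rw [this]
  exact Ideal.mul_mem_right _ _ (Ideal.subset_span rfl)

lemma killA_mem_span_prod {F : Finset I} {p : MvPolynomial I ℝ}
    (h : ∀ E : Finset I, E ⊂ F → killA E p = 0) :
    killA F p ∈ Ideal.span {(∏ i ∈ F, (X i : MvPolynomial I ℝ))} := by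
  rw [MvPolynomial.as_sum (killA F p)]
  apply Ideal.sum_mem
  intro m hm
  apply monomial_mem_span_prod
  intro i hiF
  by_contra hzero
  have hne : coeff m (killA F p) ≠ 0 := mem_support_iff.mp hm
  have hsub : m.support ⊆ F := by
    by_contra hns
    rw [coeff_killA, if_neg hns] at hne
    exact hne rfl
  have hcoeff : coeff m (killA F p) = coeff m p := by rw [coeff_killA, if_pos hsub]
  have hnotmem : i ∉ m.support := by simp [Finsupp.mem_support_iff, hzero]
  have hss : m.support ⊂ F := (Finset.ssubset_iff_of_subset hsub).mpr ⟨i, hiF, hnotmem⟩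
  have h2 : coeff m (killA m.support p) = coeff m p := by
    rw [coeff_killA, if_pos (Finset.Subset.refl _)]
  rw [h m.support hss] at h2
  simp only [coeff_zero] at h2
  exact hne (by rw [hcoeff, ← h2])

lemma flat_of_subset {V : AffineSubspace ℝ (I → ℝ)} (hsimple : IsSimple V)
    {F : Finset I} (hF : IsFlat V F) {E : Finset I} (hEF : E ⊆ F) : IsFlat V E := by
  obtain ⟨x, hxV, hx⟩ := hF
  have hrank := LinearMap.finrank_range_add_finrank_ker (resF V F)
  have hsimp := hsimple F ⟨x, hxV, hx⟩
  have hcard : Module.finrank ℝ ({i : I // i ∈ F} → ℝ) = F.card := by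
    simp [Module.finrank_pi]
  have hrange : LinearMap.range (resF V F) = ⊤ := by
    apply Submodule.eq_top_of_finrank_eq
    rw [hcard]
    omega
  have hmem : (fun j : {i : I // i ∈ F} => if (j : I) ∈ E then (0 : ℝ) else 1) ∈ LinearMap.range (resF V F) := by
    rw [hrange]; exact Submodule.mem_top
  obtain ⟨v, hv⟩ := hmem
  set w : I → ℝ := (v : I → ℝ) with hwdef
  have hw : ∀ i, i ∈ F → w i = if i ∈ E then 0 else 1 := by
    intro i hi
    have := congrFun hv ⟨i, hi⟩
    simpa [resF, LinearMap.funLeft] using this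
  obtain ⟨t, ht⟩ := Infinite.exists_notMem_finset
    (insert (0 : ℝ) (Finset.univ.image fun i : I => -(x i) / w i))
  have ht0 : t ≠ 0 := fun h => ht (by rw [h]; exact Finset.mem_insert_self 0 _)
  have htb : ∀ i : I, t ≠ -(x i) / w i := fun i h =>
    ht (Finset.mem_insert_of_mem (Finset.mem_image.mpr ⟨i, Finset.mem_univ i, h.symm⟩))
  refine ⟨x + t • w, ?_, ?_⟩
  · have hmem' : t • w ∈ V.direction := Submodule.smul_mem _ t v.2
    have := AffineSubspace.vadd_mem_of_mem_direction hmem' hxV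
    simpa [vadd_eq_add, add_comm] using this
  · intro i
    constructor
    · intro hiE
      have hiF : i ∈ F := hEF hiE
      have hwi : w i = 0 := by rw [hw i hiF, if_pos hiE]
      have hxi : x i = 0 := (hx i).mp hiF
      simp [hxi, hwi]
    · intro hzero
      by_contra hiE
      simp only [Pi.add_apply, Pi.smul_apply, smul_eq_mul] at hzero
      by_cases hiF : i ∈ F
      · have hwi : w i = 1 := by rw [hw i hiF, if_neg hiE]
        have hxi : x i = 0 := (hx i).mp hiF
        rw [hxi, hwi, mul_one, zero_add] at hzero
        exact ht0 hzero
      · have hxi : x i ≠ 0 := fun h => hiF ((hx i).mpr h)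
        by_cases hwi : w i = 0
        · rw [hwi, mul_zero, add_zero] at hzero
          exact hxi hzero
        · apply htb i
          rw [eq_div_iff hwi]
          linarith


/-- for a simple arrangement, the structure sheaf `A` on the lattice of
flats (stalks `Sym ℝ^F`) is flabby: for every flat `F` the restriction
`A(F) → A(∂F)` is surjective, and its kernel is the principal ideal generated by
`∏_{i ∈ F} e_i`.  Sections over `∂F` are compatible families over the flats `E ⊊ F`,
the restriction maps being the canonical factor maps between the quotient stalks. -/
theorem stmt10 (V : AffineSubspace ℝ (I → ℝ))
    (hne : (V : Set (I → ℝ)).Nonempty) (hess : Essential V)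
    (hsimple : IsSimple V) (F : Finset I) (hF : IsFlat V F) :
    -- surjectivity of A(F) → A(∂F):
    (∀ s : ∀ E : Finset I, IsFlat V E → E ⊂ F → (MvPolynomial I ℝ ⧸ faceIdeal (powFaces E)),
      (∀ (E E' : Finset I) (hE : IsFlat V E) (hE' : IsFlat V E') (h : E ⊆ E')
          (hEF : E ⊂ F) (hE'F : E' ⊂ F)
          (hle : faceIdeal (powFaces E') ≤ faceIdeal (powFaces E)),
        Ideal.Quotient.factor hle (s E' hE' hE'F) = s E hE hEF) →
      ∃ p : MvPolynomial I ℝ, ∀ (E : Finset I) (hE : IsFlat V E) (hEF : E ⊂ F),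
        stalkA E p = s E hE hEF) ∧
    -- the kernel of A(F) → A(∂F) is generated by ∏_{i ∈ F} e_i:
    (∀ p : MvPolynomial I ℝ,
      (∀ (E : Finset I), IsFlat V E → E ⊂ F → stalkA E p = 0) ↔
        p ∈ faceIdeal (powFaces F) ⊔
          Ideal.span {(∏ i ∈ F, (X i : MvPolynomial I ℝ))}) := by
  have hflat : ∀ E : Finset I, E ⊂ F → IsFlat V E :=
    fun E h => flat_of_subset hsimple hF h.subset
  constructor
  · -- surjectivity
    intro s hcomp
    classical
    let q : Finset I → MvPolynomial I ℝ := fun E =>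
      if h : E ⊂ F then
        killA E ((Ideal.Quotient.mk_surjective (I := faceIdeal (powFaces E))
          (s E (hflat E h) h)).choose)
      else 0
    have hqs : ∀ (E : Finset I) (h : E ⊂ F), stalkA E (q E) = s E (hflat E h) h := by
      intro E h
      have hc := (Ideal.Quotient.mk_surjective (I := faceIdeal (powFaces E))
          (s E (hflat E h) h)).choose_spec
      show stalkA E (dite _ _ _) = _
      rw [dif_pos h, stalkA_killA]
      exact hc
    have hqfix : ∀ E : Finset I, killA E (q E) = q E := by
      intro E
      show killA E (dite _ _ _) = dite _ _ _
      split_ifs with h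
      · rw [killA_killA, Finset.inter_self]
      · exact map_zero _
    have hkey : ∀ (C E : Finset I), C ⊆ E → E ⊂ F → killA C (q E) = q C := by
      intro C E hCE hE
      have hC : C ⊂ F := lt_of_le_of_lt hCE hE
      have hle := faceIdeal_mono hCE
      have hfac := hcomp C E (hflat C hC) (hflat E hE) hCE hC hE hle
      set a := killA C (q E) with ha
      have hC1 : stalkA C a = s C (hflat C hC) hC := by
        rw [ha, stalkA_killA]
        have : stalkA C (q E) = Ideal.Quotient.factor hle (stalkA E (q E)) := by
          rw [stalkA, stalkA, Ideal.Quotient.factor_mk]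
        rw [this, hqs E hE, hfac]
      have hsub : a - q C ∈ faceIdeal (powFaces C) := by
        rw [← Ideal.Quotient.mk_eq_mk_iff_sub_mem]
        show stalkA C a = stalkA C (q C)
        rw [hC1, hqs C hC]
      have := mem_faceIdeal_iff_killA.mp hsub
      rw [map_sub, ha, killA_killA, Finset.inter_self, ← ha, hqfix C] at this
      have := sub_eq_zero.mp this
      rw [ha] at this
      exact this
    have hkill₀ : ∀ (E₀ E : Finset I), E ⊂ F → killA E₀ (q E) = q (E₀ ∩ E) := by
      intro E₀ E hE
      rw [← hqfix E, killA_killA]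
      exact hkey (E₀ ∩ E) E Finset.inter_subset_right hE
    have main : ∀ k : ℕ, ∃ p : MvPolynomial I ℝ,
        ∀ E : Finset I, E ⊂ F → E.card < k → killA E p = q E := by
      intro k
      induction k with
      | zero => exact ⟨0, fun E h hc => absurd hc (by omega)⟩
      | succ k ih =>
        obtain ⟨p, hp⟩ := ih
        set S := F.powerset.filter (fun E => E ≠ F ∧ E.card = k) with hS
        have hSmem : ∀ E ∈ S, E ⊂ F ∧ E.card = k := by
          intro E hE
          simp only [hS, Finset.mem_filter, Finset.mem_powerset] at hE
          exact ⟨Finset.ssubset_iff_subset_ne.mpr ⟨hE.1, hE.2.1⟩, hE.2.2⟩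
        refine ⟨p + ∑ E ∈ S, (q E - killA E p), ?_⟩
        intro E₀ h₀ hc₀
        have hterm : ∀ E ∈ S, E ≠ E₀ → killA E₀ (q E - killA E p) = 0 := by
          intro E hES hne
          obtain ⟨hEF, hEk⟩ := hSmem E hES
          have hint : E₀ ∩ E ⊂ F := lt_of_le_of_lt Finset.inter_subset_left h₀
          have hcardlt : (E₀ ∩ E).card < k := by
            rcases lt_or_eq_of_le (Nat.le_of_lt_succ hc₀) with hlt | hkeq
            · exact lt_of_le_of_lt (Finset.card_le_card Finset.inter_subset_left) hlt
            · -- E₀.card = k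
              by_contra hge
              push_neg at hge
              have h1 : E₀ ∩ E = E₀ := Finset.eq_of_subset_of_card_le
                Finset.inter_subset_left (by omega)
              have h2 : E₀ ⊆ E := h1 ▸ Finset.inter_subset_right
              exact hne (Finset.eq_of_subset_of_card_le h2 (by omega)).symm
          rw [map_sub, hkill₀ E₀ E hEF, killA_killA, hp _ hint hcardlt, sub_self]
        rw [map_add, map_sum]
        rcases lt_or_eq_of_le (Nat.le_of_lt_succ hc₀) with hlt | hkeq
        · rw [hp E₀ h₀ hlt]
          have : ∀ E ∈ S, killA E₀ (q E - killA E p) = 0 := by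
            intro E hES
            rcases eq_or_ne E E₀ with heq | hne
            · rw [heq, map_sub, hkill₀ E₀ E₀ h₀, Finset.inter_self, killA_killA,
                Finset.inter_self, hp E₀ h₀ hlt, sub_self]
            · exact hterm E hES hne
          rw [Finset.sum_congr rfl this, Finset.sum_const_zero, add_zero]
        · have hE₀S : E₀ ∈ S := by
            simp only [hS, Finset.mem_filter, Finset.mem_powerset]
            exact ⟨h₀.subset, h₀.ne, hkeq⟩
          rw [Finset.sum_eq_single_of_mem E₀ hE₀S (fun E hES hne => hterm E hES hne)]
          rw [map_sub, hkill₀ E₀ E₀ h₀, Finset.inter_self, killA_killA, Finset.inter_self]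
          ring
    obtain ⟨p, hp⟩ := main F.card
    refine ⟨p, fun E hE hEF => ?_⟩
    have h1 : killA E p = q E := hp E hEF (Finset.card_lt_card hEF)
    have : stalkA E p = stalkA E (q E) := by rw [← stalkA_killA, h1]
    rw [this]
    exact hqs E hEF
  · -- kernel
    intro p
    constructor
    · intro h
      have hkill : ∀ E : Finset I, E ⊂ F → killA E p = 0 := fun E hEF =>
        stalkA_eq_zero_iff.mp (h E (hflat E hEF) hEF)
      have h1 : p - killA F p ∈ faceIdeal (powFaces F) := sub_killA_mem F p
      have h2 := killA_mem_span_prod hkill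
      have hdecomp : p = (p - killA F p) + killA F p := by ring
      rw [hdecomp]
      exact Ideal.add_mem _ (Ideal.mem_sup_left h1) (Ideal.mem_sup_right h2)
    · intro hp E hE hEF
      rw [stalkA, Ideal.Quotient.eq_zero_iff_mem]
      have hle : faceIdeal (powFaces F) ⊔
          Ideal.span {(∏ i ∈ F, (X i : MvPolynomial I ℝ))} ≤ faceIdeal (powFaces E) := by
        apply sup_le (faceIdeal_mono hEF.subset)
        rw [Ideal.span_singleton_le_iff_mem]
        refine Ideal.subset_span ⟨F, ?_, rfl⟩
        intro hFE
        exact hEF.ne (Finset.Subset.antisymm hEF.subset hFE)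
      exact hle hp
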